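/- The equation x² + y² + t⁴ = 22 has no solutions with x, y, t in ℤ[1/2] (i.e., rationals whose denominators are powers of 2). -/
import Mathlib

lemma sq_mod4 (X : ℤ) : (X ^ 2 % 4 = 0 ∧ X % 2 = 0) ∨ X ^ 2 % 4 = 1 := by
  rcases Int.even_or_odd X with ⟨k, hk⟩ | ⟨k, hk⟩
  · left
    have h : X ^ 2 = 4 * (k * k) := by rw [hk]; ring
    omega
  · right
    have h : X ^ 2 = 4 * (k * k + k) + 1 := by rw [hk]; ring
    omega

lemma base_case (X Y C : ℤ) : X ^ 2 + Y ^ 2 + C ^ 4 ≠ 22 := by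
  intro h
  have hC4 : C ^ 4 = (C ^ 2) ^ 2 := by ring
  have hX : -4 ≤ X ∧ X ≤ 4 := by constructor <;> nlinarith [sq_nonneg Y, sq_nonneg (C^2), sq_nonneg (X+4), sq_nonneg (X-4)]
  have hY : -4 ≤ Y ∧ Y ≤ 4 := by constructor <;> nlinarith [sq_nonneg X, sq_nonneg (C^2), sq_nonneg (Y+4), sq_nonneg (Y-4)]
  have hCb : -2 ≤ C ∧ C ≤ 2 := by
    constructor <;> nlinarith [sq_nonneg X, sq_nonneg Y, sq_nonneg (C^2), sq_nonneg (C+2), sq_nonneg (C-2), sq_nonneg (C^2-4)]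
  obtain ⟨h1, h2⟩ := hX
  obtain ⟨h3, h4⟩ := hY
  obtain ⟨h5, h6⟩ := hCb
  interval_cases X <;> interval_cases Y <;> interval_cases C <;> omega

lemma main_int : ∀ n : ℕ, ∀ X Y C : ℤ, X ^ 2 + Y ^ 2 + C ^ 4 ≠ 22 * 16 ^ n := by
  intro n
  induction n with
  | zero => simpa using base_case
  | succ n ih =>
    intro X Y C h
    have hR : (22 : ℤ) * 16 ^ (n + 1) = 4 * (88 * 16 ^ n) := by ring
    have hC4 : C ^ 4 = (C ^ 2) ^ 2 := by ring
    have hsX := sq_mod4 X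
    have hsY := sq_mod4 Y
    have hsC := sq_mod4 (C ^ 2)
    rw [hC4] at h
    have hXe : X % 2 = 0 := by omega
    have hYe : Y % 2 = 0 := by omega
    have hCe2 : C ^ 2 % 2 = 0 := by
      rcases sq_mod4 C with ⟨h1, _⟩ | h1 <;> omega
    have hCe : C % 2 = 0 := by
      rcases sq_mod4 C with ⟨_, h1⟩ | h1 <;> omega
    obtain ⟨x, hx⟩ : ∃ x, X = 2 * x := ⟨X / 2, by omega⟩
    obtain ⟨y, hy⟩ : ∃ y, Y = 2 * y := ⟨Y / 2, by omega⟩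
    obtain ⟨c, hc⟩ : ∃ c, C = 2 * c := ⟨C / 2, by omega⟩
    subst hx hy hc
    have h2 : x ^ 2 + y ^ 2 + 4 * c ^ 4 = 88 * 16 ^ n :=
      mul_left_cancel₀ (by norm_num : (4 : ℤ) ≠ 0) (by linear_combination h)
    -- second descent step
    have hsx := sq_mod4 x
    have hsy := sq_mod4 y
    have hxe : x % 2 = 0 := by omega
    have hye : y % 2 = 0 := by omega
    obtain ⟨x', hx'⟩ : ∃ x', x = 2 * x' := ⟨x / 2, by omega⟩
    obtain ⟨y', hy'⟩ : ∃ y', y = 2 * y' := ⟨y / 2, by omega⟩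
    subst hx' hy'
    exact ih x' y' c (mul_left_cancel₀ (by norm_num : (4 : ℤ) ≠ 0) (by linear_combination h2))

/-- The equation `x² + y² + t⁴ = 22` has no solutions in `ℤ[1/2]`, i.e. among
rationals whose denominators are powers of `2`. -/
theorem no_two_integral_solutions_x2_y2_t4_eq_22 :
    ∀ x y t : ℚ,
      (∃ (a : ℤ) (r : ℕ), x = (a : ℚ) / 2 ^ r) →
      (∃ (a : ℤ) (r : ℕ), y = (a : ℚ) / 2 ^ r) →
      (∃ (a : ℤ) (r : ℕ), t = (a : ℚ) / 2 ^ r) →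
      x ^ 2 + y ^ 2 + t ^ 4 ≠ 22 := by
  rintro x y t ⟨a, r, ha⟩ ⟨b, s, hb⟩ ⟨c, u, hc⟩ h
  set m := max r (max s u) with hm
  have hr : r ≤ m := le_max_left _ _
  have hs : s ≤ m := le_trans (le_max_left _ _) (le_max_right _ _)
  have hu : u ≤ m := le_trans (le_max_right _ _) (le_max_right _ _)
  set X : ℤ := a * 2 ^ (2 * m - r) with hX
  set Y : ℤ := b * 2 ^ (2 * m - s) with hY
  set T : ℤ := c * 2 ^ (m - u) with hT
  have hx2 : (X : ℚ) = x * 2 ^ (2 * m) := by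
    rw [ha, hX]
    push_cast
    rw [div_mul_eq_mul_div, eq_div_iff (by positivity), mul_assoc, ← pow_add]
    congr 2
    omega
  have hy2 : (Y : ℚ) = y * 2 ^ (2 * m) := by
    rw [hb, hY]
    push_cast
    rw [div_mul_eq_mul_div, eq_div_iff (by positivity), mul_assoc, ← pow_add]
    congr 2
    omega
  have ht2 : (T : ℚ) = t * 2 ^ m := by
    rw [hc, hT]
    push_cast
    rw [div_mul_eq_mul_div, eq_div_iff (by positivity), mul_assoc, ← pow_add]
    congr 2
    omega
  have h16 : (16 : ℚ) ^ m = 2 ^ (4 * m) := by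
    rw [show (16 : ℚ) = 2 ^ 4 by norm_num, ← pow_mul]
  have key : (X : ℚ) ^ 2 + (Y : ℚ) ^ 2 + (T : ℚ) ^ 4 = 22 * 16 ^ m := by
    rw [hx2, hy2, ht2, h16]
    linear_combination (2 : ℚ) ^ (4 * m) * h
  have keyZ : X ^ 2 + Y ^ 2 + T ^ 4 = 22 * 16 ^ m := by exact_mod_cast key
  exact main_int m X Y T keyZ
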